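/- Let γ = n/2 and β = 4 + n/2. Suppose for all 0 < v < δ/4, 0 < |t| < 1, and x with |x_1| > δ/2 one has |S_t h_v(x)| ≤ C v/|t|^γ and |S_t h_v(x)| ≤ C |t|/v^β. Let v_k = ε_k v_{k-1}^μ with ε_k = 2^{-k} and μ = max(n, 2+n/4) (so μ ≥ 2γ and μ ≥ β/2), and let t_k satisfy c v_k² ≤ |t_k| ≤ C v_k². Then: (a) ∑_{i=k+1}^∞ |S_{t_k} h_{v_i}(x)| ≤ C' ε_{k+1}; (b) ∑_{i=K}^{k-1} |S_{t_k} h_{v_i}(x)| ≤ C' ε_k². Consequently ∑_{i≠k, i≥K} |S_{t_k} h_{v_i}(x)| → 0 as k → ∞. -/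

import Mathlib

open Filter Finset

/-- with `γ = n/2`, `β = 4 + n/2`, `|S_t h_v(x)| ≤ C v/|t|^γ` and
`|S_t h_v(x)| ≤ C|t|/v^β` (encoded by the quantities `b k i = |S_{t_k} h_{v_i}(x)|`),
`v_k = ε_k v_{k-1}^μ`, `|t_k| ∼ v_k²`: (a) `∑_{i ≥ k+1} b k i ≤ C' ε_{k+1}`;
(b) `∑_{i=K}^{k-1} b k i ≤ C' ε_k²`; consequently the off-diagonal sum tends to 0. -/
theorem stmt16 (n : ℕ) (hn : 2 ≤ n) (γ β μ : ℝ)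
    (hγ : γ = (n : ℝ) / 2) (hβ : β = 4 + (n : ℝ) / 2)
    (hμ : μ = max (n : ℝ) (2 + (n : ℝ) / 4))
    (v : ℕ → ℝ) (hpos : ∀ k, 1 ≤ k → 0 < v k) (hv1 : v 1 < 1)
    (hrec : ∀ k, 2 ≤ k → v k = 2 ^ (-(k : ℝ)) * v (k - 1) ^ μ)
    (C c₁ C₁ : ℝ) (hC : 0 < C) (hc₁ : 0 < c₁) (hC₁ : 0 < C₁)
    (t : ℕ → ℝ)
    (ht : ∀ k, 1 ≤ k → c₁ * v k ^ 2 ≤ |t k| ∧ |t k| ≤ C₁ * v k ^ 2)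
    (b : ℕ → ℕ → ℝ) (hbnn : ∀ k i, 0 ≤ b k i)
    (hb1 : ∀ k i, 1 ≤ k → 1 ≤ i → b k i ≤ C * v i / |t k| ^ γ)
    (hb2 : ∀ k i, 1 ≤ k → 1 ≤ i → b k i ≤ C * |t k| / v i ^ β)
    (K : ℕ) (hK : 1 ≤ K) :
    ∃ C' : ℝ, 0 < C' ∧
      (∀ k, K ≤ k → (∑' i : ℕ, b k (k + 1 + i)) ≤ C' * 2 ^ (-((k : ℝ) + 1))) ∧
      (∀ k, K + 1 ≤ k → (∑ i ∈ Finset.Icc K (k - 1), b k i) ≤ C' * (2 ^ (-(k : ℝ))) ^ 2) ∧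
      Filter.Tendsto
        (fun k : ℕ => (∑' i : ℕ, b k (k + 1 + i)) + ∑ i ∈ Finset.Icc K (k - 1), b k i)
        Filter.atTop (nhds 0) := by
  have hn0 : (2:ℝ) ≤ (n:ℝ) := by exact_mod_cast hn
  have hγpos : 0 < γ := by rw [hγ]; linarith
  have hβ1 : (1:ℝ) ≤ β := by rw [hβ]; linarith
  have hβpos : 0 < β := by linarith
  have hμ1 : (1:ℝ) ≤ μ := by
    rw [hμ]; have := le_max_left (n:ℝ) (2+(n:ℝ)/4); linarith
  have hμ2γ : 2*γ ≤ μ := by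
    rw [hγ, hμ]; have := le_max_left (n:ℝ) (2+(n:ℝ)/4); linarith
  have hβ2μ : β ≤ μ + μ := by
    rw [hβ, hμ]; have := le_max_right (n:ℝ) (2+(n:ℝ)/4); linarith
  -- v k < 1 for k ≥ 1
  have hvlt1 : ∀ k, 1 ≤ k → v k < 1 := by
    intro k hk
    induction k, hk using Nat.le_induction with
    | base => exact hv1
    | succ k hk ih =>
      rw [hrec (k+1) (by omega)]
      simp only [Nat.add_sub_cancel]
      have h1 : v k ^ μ ≤ 1 := Real.rpow_le_one (hpos k hk).le ih.le (by linarith)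
      have h2 : (2:ℝ) ^ (-((k+1:ℕ):ℝ)) < 1 := by
        apply Real.rpow_lt_one_of_one_lt_of_neg one_lt_two
        push_cast
        have : (0:ℝ) ≤ (k:ℝ) := Nat.cast_nonneg k
        linarith
      have h3 : (0:ℝ) < (2:ℝ) ^ (-((k+1:ℕ):ℝ)) := Real.rpow_pos_of_pos two_pos _
      nlinarith [Real.rpow_nonneg (hpos k hk).le μ]
  -- geometric decay
  have hdec : ∀ k, 1 ≤ k → v (k+1) ≤ 2⁻¹ * v k := by
    intro k hk
    rw [hrec (k+1) (by omega)]
    simp only [Nat.add_sub_cancel]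
    have h1 : v k ^ μ ≤ v k := by
      have := Real.rpow_le_rpow_of_exponent_ge (hpos k hk) (hvlt1 k hk).le hμ1
      rwa [Real.rpow_one] at this
    have h2 : (2:ℝ) ^ (-((k+1:ℕ):ℝ)) ≤ 2⁻¹ := by
      rw [show (2:ℝ)⁻¹ = (2:ℝ) ^ (-1:ℝ) by rw [Real.rpow_neg_one]]
      apply Real.rpow_le_rpow_of_exponent_le one_le_two
      push_cast
      have : (0:ℝ) ≤ (k:ℝ) := Nat.cast_nonneg k
      linarith
    exact mul_le_mul h2 h1 (Real.rpow_nonneg (hpos k hk).le μ) (by norm_num)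
  have hgeo : ∀ m, 1 ≤ m → ∀ i, v (m+i) ≤ (2⁻¹:ℝ)^i * v m := by
    intro m hm i
    induction i with
    | zero => simp
    | succ i ih =>
      have h := hdec (m+i) (by omega)
      calc v (m+(i+1)) = v ((m+i)+1) := rfl
        _ ≤ 2⁻¹ * v (m+i) := h
        _ ≤ 2⁻¹ * ((2⁻¹:ℝ)^i * v m) := by
            apply mul_le_mul_of_nonneg_left ih (by norm_num)
        _ = (2⁻¹:ℝ)^(i+1) * v m := by ring
  have hc₁γ : 0 < c₁ ^ γ := Real.rpow_pos_of_pos hc₁ γ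
  -- sum of reciprocals lemma
  have hsum : ∀ m, K ≤ m → (∑ i ∈ Finset.Icc K m, 1 / v i ^ β) ≤ 2 / v m ^ β := by
    intro m hm
    induction m, hm using Nat.le_induction with
    | base =>
      rw [Finset.Icc_self, Finset.sum_singleton]
      have hp : (0:ℝ) < v K ^ β := Real.rpow_pos_of_pos (hpos K hK) β
      rw [div_le_div_iff₀ hp hp]; nlinarith
    | succ m hm ih =>
      rw [Finset.sum_Icc_succ_top (by omega : K ≤ m+1)]
      have hm1 : 1 ≤ m := le_trans hK hm
      have hvm : 0 < v m := hpos m hm1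
      have hvm1 : 0 < v (m+1) := hpos (m+1) (by omega)
      have hp : 0 < v m ^ β := Real.rpow_pos_of_pos hvm β
      have hp1 : 0 < v (m+1) ^ β := Real.rpow_pos_of_pos hvm1 β
      have key : 2 * v (m+1) ^ β ≤ v m ^ β := by
        have h1 : v (m+1) ^ β ≤ (2⁻¹ * v m) ^ β :=
          Real.rpow_le_rpow hvm1.le (hdec m hm1) hβpos.le
        have h2 : ((2:ℝ)⁻¹ * v m) ^ β = (2⁻¹:ℝ)^β * v m ^ β :=
          Real.mul_rpow (by norm_num) hvm.le
        have h3 : ((2:ℝ)⁻¹) ^ β ≤ 2⁻¹ := by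
          have := Real.rpow_le_rpow_of_exponent_ge (by norm_num : (0:ℝ) < 2⁻¹)
            (by norm_num) hβ1
          rwa [Real.rpow_one] at this
        nlinarith [mul_le_mul_of_nonneg_right h3 hp.le]
      have h4 : 2 / v m ^ β ≤ 1 / v (m+1) ^ β := by
        rw [div_le_div_iff₀ hp hp1]
        nlinarith
      have h5 : 2 / v (m+1) ^ β = 1 / v (m+1) ^ β + 1 / v (m+1) ^ β := by ring
      linarith
  -- Part A
  have partA : ∀ k, K ≤ k →
      (∑' i : ℕ, b k (k + 1 + i)) ≤ (2*C/c₁^γ) * 2 ^ (-((k:ℝ)+1)) := by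
    intro k hk
    have hk1 : 1 ≤ k := le_trans hK hk
    have hvk : 0 < v k := hpos k hk1
    have htk := ht k hk1
    have htkpos : 0 < |t k| := lt_of_lt_of_le (by positivity) htk.1
    have hD : 0 < |t k| ^ γ := Real.rpow_pos_of_pos htkpos γ
    have hv1pos : 0 < v (k+1) := hpos (k+1) (by omega)
    have hterm : ∀ i, b k (k+1+i) ≤ (C * v (k+1) / |t k| ^ γ) * (2⁻¹:ℝ)^i := by
      intro i
      have h1 := hb1 k (k+1+i) hk1 (by omega)
      have h2 : v (k+1+i) ≤ (2⁻¹:ℝ)^i * v (k+1) := hgeo (k+1) (by omega) i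
      calc b k (k+1+i) ≤ C * v (k+1+i) / |t k| ^ γ := h1
        _ ≤ C * ((2⁻¹:ℝ)^i * v (k+1)) / |t k| ^ γ := by gcongr
        _ = (C * v (k+1) / |t k| ^ γ) * (2⁻¹:ℝ)^i := by ring
    have hgs : Summable (fun i : ℕ => (C * v (k+1) / |t k| ^ γ) * (2⁻¹:ℝ)^i) :=
      (summable_geometric_of_lt_one (by norm_num) (by norm_num)).mul_left _
    have hbs : Summable (fun i : ℕ => b k (k+1+i)) :=
      Summable.of_nonneg_of_le (fun i => hbnn _ _) hterm hgs
    have htsum : (∑' i : ℕ, b k (k+1+i)) ≤ (C * v (k+1) / |t k| ^ γ) * 2 := by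
      calc (∑' i : ℕ, b k (k+1+i))
          ≤ ∑' i : ℕ, (C * v (k+1) / |t k| ^ γ) * (2⁻¹:ℝ)^i := Summable.tsum_le_tsum hterm hbs hgs
        _ = (C * v (k+1) / |t k| ^ γ) * ∑' i : ℕ, (2⁻¹:ℝ)^i := tsum_mul_left
        _ = (C * v (k+1) / |t k| ^ γ) * 2 := by
            rw [tsum_geometric_of_lt_one (by norm_num) (by norm_num)]
            norm_num
    have hrk := hrec (k+1) (by omega)
    simp only [Nat.add_sub_cancel] at hrk
    push_cast at hrk
    have hvk2γ : 0 < v k ^ (2*γ) := Real.rpow_pos_of_pos hvk _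
    have hmu : v k ^ μ ≤ v k ^ (2*γ) :=
      Real.rpow_le_rpow_of_exponent_ge hvk (hvlt1 k hk1).le hμ2γ
    have hDlb : c₁ ^ γ * v k ^ (2*γ) ≤ |t k| ^ γ := by
      have h1 : (c₁ * v k ^ 2) ^ γ ≤ |t k| ^ γ :=
        Real.rpow_le_rpow (by positivity) htk.1 hγpos.le
      have h2 : (c₁ * v k ^ 2) ^ γ = c₁ ^ γ * v k ^ (2*γ) := by
        rw [Real.mul_rpow hc₁.le (by positivity)]
        congr 1
        rw [← Real.rpow_natCast (v k) 2, ← Real.rpow_mul hvk.le]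
        norm_num
      rwa [h2] at h1
    have hnum : v (k+1) ≤ 2 ^ (-((k:ℝ)+1)) * v k ^ (2*γ) := by
      rw [hrk]
      exact mul_le_mul_of_nonneg_left hmu (Real.rpow_nonneg (by norm_num) _)
    have hfrac : v (k+1) / |t k| ^ γ ≤ (1/c₁^γ) * 2 ^ (-((k:ℝ)+1)) := by
      calc v (k+1) / |t k| ^ γ
          ≤ (2 ^ (-((k:ℝ)+1)) * v k ^ (2*γ)) / (c₁ ^ γ * v k ^ (2*γ)) :=
            div_le_div₀ (by positivity) hnum (by positivity) hDlb
        _ = (1/c₁^γ) * 2 ^ (-((k:ℝ)+1)) := by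
            rw [mul_div_mul_right _ _ hvk2γ.ne']
            ring
    calc (∑' i : ℕ, b k (k+1+i)) ≤ (C * v (k+1) / |t k| ^ γ) * 2 := htsum
      _ = 2 * C * (v (k+1) / |t k| ^ γ) := by ring
      _ ≤ 2 * C * ((1/c₁^γ) * 2 ^ (-((k:ℝ)+1))) :=
          mul_le_mul_of_nonneg_left hfrac (by positivity)
      _ = (2*C/c₁^γ) * 2 ^ (-((k:ℝ)+1)) := by ring
  -- Part B
  have partB : ∀ k, K + 1 ≤ k →
      (∑ i ∈ Finset.Icc K (k - 1), b k i) ≤ (2*C*C₁) * ((2:ℝ) ^ (-(k:ℝ)))^2 := by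
    intro k hk
    have hk1 : 1 ≤ k := by omega
    have hvk : 0 < v k := hpos k hk1
    have hvk1 : 0 < v (k-1) := hpos (k-1) (by omega)
    have htk := ht k hk1
    have htkpos : 0 < |t k| := lt_of_lt_of_le (by positivity) htk.1
    have hP : 0 < v (k-1) ^ β := Real.rpow_pos_of_pos hvk1 β
    have step1 : (∑ i ∈ Finset.Icc K (k-1), b k i)
        ≤ ∑ i ∈ Finset.Icc K (k-1), C * |t k| * (1 / v i ^ β) := by
      apply Finset.sum_le_sum
      intro i hi
      rw [Finset.mem_Icc] at hi
      have := hb2 k i hk1 (by omega)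
      calc b k i ≤ C * |t k| / v i ^ β := this
        _ = C * |t k| * (1 / v i ^ β) := by ring
    have step2 : (∑ i ∈ Finset.Icc K (k-1), C * |t k| * (1 / v i ^ β))
        = C * |t k| * ∑ i ∈ Finset.Icc K (k-1), 1 / v i ^ β := by
      rw [Finset.mul_sum]
    have hsum' := hsum (k-1) (by omega)
    have hsumnn : 0 ≤ ∑ i ∈ Finset.Icc K (k-1), 1 / v i ^ β := by
      apply Finset.sum_nonneg
      intro i hi
      rw [Finset.mem_Icc] at hi
      have : 0 < v i ^ β := Real.rpow_pos_of_pos (hpos i (by omega)) β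
      positivity
    have hdivle : v k ^ 2 / v (k-1) ^ β ≤ ((2:ℝ) ^ (-(k:ℝ)))^2 := by
      rw [div_le_iff₀ hP]
      have hrk := hrec k (by omega)
      have hmm : v (k-1) ^ μ * v (k-1) ^ μ ≤ v (k-1) ^ β := by
        rw [← Real.rpow_add hvk1]
        exact Real.rpow_le_rpow_of_exponent_ge hvk1 (hvlt1 (k-1) (by omega)).le hβ2μ
      have hexp : v k ^ 2 = ((2:ℝ) ^ (-(k:ℝ)))^2 * (v (k-1) ^ μ * v (k-1) ^ μ) := by
        rw [hrk]; ring
      rw [hexp]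
      exact mul_le_mul_of_nonneg_left hmm (by positivity)
    calc (∑ i ∈ Finset.Icc K (k-1), b k i)
        ≤ C * |t k| * ∑ i ∈ Finset.Icc K (k-1), 1 / v i ^ β := by
          rw [← step2]; exact step1
      _ ≤ C * (C₁ * v k ^ 2) * (2 / v (k-1) ^ β) := by
          apply mul_le_mul
          · exact mul_le_mul_of_nonneg_left htk.2 hC.le
          · exact hsum'
          · exact hsumnn
          · positivity
      _ = (2*C*C₁) * (v k ^ 2 / v (k-1) ^ β) := by ring
      _ ≤ (2*C*C₁) * ((2:ℝ) ^ (-(k:ℝ)))^2 :=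
          mul_le_mul_of_nonneg_left hdivle (by positivity)
  -- combine
  have hC'pos : (0:ℝ) < 2*C/c₁^γ + 2*C*C₁ + 1 := by
    have h1 : 0 < 2*C/c₁^γ := by positivity
    nlinarith [mul_pos hC hC₁]
  have hA : ∀ k, K ≤ k →
      (∑' i : ℕ, b k (k + 1 + i)) ≤ (2*C/c₁^γ + 2*C*C₁ + 1) * 2 ^ (-((k:ℝ)+1)) := by
    intro k hk
    refine le_trans (partA k hk) ?_
    apply mul_le_mul_of_nonneg_right _ (Real.rpow_nonneg (by norm_num) _)
    nlinarith [mul_pos hC hC₁]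
  have hB : ∀ k, K + 1 ≤ k →
      (∑ i ∈ Finset.Icc K (k - 1), b k i) ≤ (2*C/c₁^γ + 2*C*C₁ + 1) * ((2:ℝ) ^ (-(k:ℝ)))^2 := by
    intro k hk
    refine le_trans (partB k hk) ?_
    apply mul_le_mul_of_nonneg_right _ (by positivity)
    have h1 : 0 < 2*C/c₁^γ := by positivity
    linarith
  refine ⟨2*C/c₁^γ + 2*C*C₁ + 1, hC'pos, hA, hB, ?_⟩
  -- limit
  set C' := 2*C/c₁^γ + 2*C*C₁ + 1 with hC'def
  have hhalf : Tendsto (fun k:ℕ => ((2:ℝ)⁻¹)^k) atTop (nhds 0) :=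
    tendsto_pow_atTop_nhds_zero_of_lt_one (by norm_num) (by norm_num)
  have e1 : ∀ k:ℕ, (2:ℝ)^(-(k:ℝ)) = ((2:ℝ)⁻¹)^k := by
    intro k
    rw [Real.rpow_neg (by norm_num), Real.rpow_natCast, ← inv_pow]
  have e2 : ∀ k:ℕ, (2:ℝ)^(-((k:ℝ)+1)) = 2⁻¹ * ((2:ℝ)⁻¹)^k := by
    intro k
    rw [show -((k:ℝ)+1) = (-(k:ℝ)) + (-1) by ring, Real.rpow_add (by norm_num), e1,
        Real.rpow_neg_one]
    ring
  have hg : Tendsto (fun k:ℕ => C' * 2 ^ (-((k:ℝ)+1)) + C' * ((2:ℝ)^(-(k:ℝ)))^2)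
      atTop (nhds 0) := by
    have hrw : (fun k:ℕ => C' * 2 ^ (-((k:ℝ)+1)) + C' * ((2:ℝ)^(-(k:ℝ)))^2)
        = fun k:ℕ => C'/2 * ((2:ℝ)⁻¹)^k + C' * (((2:ℝ)⁻¹)^k * ((2:ℝ)⁻¹)^k) := by
      funext k
      rw [e1, e2]
      ring
    rw [hrw]
    have h := ((hhalf.const_mul (C'/2)).add ((hhalf.mul hhalf).const_mul C'))
    simpa using h
  apply squeeze_zero'
  · filter_upwards with k
    have h1 : 0 ≤ ∑' i : ℕ, b k (k+1+i) := tsum_nonneg (fun i => hbnn _ _)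
    have h2 : 0 ≤ ∑ i ∈ Finset.Icc K (k-1), b k i :=
      Finset.sum_nonneg (fun i _ => hbnn _ _)
    linarith
  · filter_upwards [eventually_ge_atTop (K+1)] with k hk
    exact add_le_add (hA k (by omega)) (hB k hk)
  · exact hg
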